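/- Let g_1,…,g_q ∈ ℝ^{n1} be column vectors and h_1,…,h_q ∈ ℝ^{1×n2} be row vectors, and let G = [g_1 … g_q] and H be the matrix with rows h_1,…,h_q. Then the maximum cardinality of a jointly independent index set of (G, H) (taken to be 0 if none exists) equals min over all subsets S ⊆ 𝐪 of (rank G_S + rank H_{𝐪−S}). -/

import Mathlib

open Matrix BigOperators

namespace StructCtrl

/-- A general linearly parameterized `n1 × n2` matrix `M(p) = ∑ k, p k • (g k * h k)`,
with columns `g k` and rows `h k`. -/
noncomputable def paramMat {q n1 n2 : ℕ} (g : Fin q → Fin n1 → ℝ) (h : Fin q → Fin n2 → ℝ)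
    (p : Fin q → ℝ) : Matrix (Fin n1) (Fin n2) ℝ :=
  Matrix.of fun i j => ∑ k : Fin q, p k * (g k i * h k j)

/-- Generic rank: the maximum over `p ∈ ℝ^q` of the rank of `M(p)`. -/
noncomputable def genericRank {q n1 n2 : ℕ} (g : Fin q → Fin n1 → ℝ)
    (h : Fin q → Fin n2 → ℝ) : ℕ :=
  ⨆ p : Fin q → ℝ, (paramMat g h p).rank

/-- `A(p)`: the `n × n` matrix of the first `n` columns of `[A(p) B(p)]`. -/
noncomputable def Amat {n m q : ℕ} (g : Fin q → Fin n → ℝ) (h : Fin q → Fin (n + m) → ℝ)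
    (p : Fin q → ℝ) : Matrix (Fin n) (Fin n) ℝ :=
  Matrix.of fun i j => paramMat g h p i (Fin.castAdd m j)

/-- `B(p)`: the `n × m` matrix of the last `m` columns of `[A(p) B(p)]`. -/
noncomputable def Bmat {n m q : ℕ} (g : Fin q → Fin n → ℝ) (h : Fin q → Fin (n + m) → ℝ)
    (p : Fin q → ℝ) : Matrix (Fin n) (Fin m) ℝ :=
  Matrix.of fun i j => paramMat g h p i (Fin.natAdd n j)

/-- Controllability matrix `[B  AB  …  A^{n-1}B]` (columns indexed by `Fin n × Fin m`). -/
noncomputable def ctrbMat {n m : ℕ} (A : Matrix (Fin n) (Fin n) ℝ)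
    (B : Matrix (Fin n) (Fin m) ℝ) : Matrix (Fin n) (Fin n × Fin m) ℝ :=
  Matrix.of fun i kj => (A ^ (kj.1 : ℕ) * B) i kj.2

/-- `(A, B)` is structurally controllable: for some parameter value the controllability
matrix has full rank `n`. -/
def StructurallyControllable {n m q : ℕ} (g : Fin q → Fin n → ℝ)
    (h : Fin q → Fin (n + m) → ℝ) : Prop :=
  ∃ p : Fin q → ℝ, (ctrbMat (Amat g h p) (Bmat g h p)).rank = n

/-- The binary assumption: all entries of every `g k` and every `h k` are `0` or `1`. -/
def BinaryAssumption {n m q : ℕ} (g : Fin q → Fin n → ℝ)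
    (h : Fin q → Fin (n + m) → ℝ) : Prop :=
  (∀ k i, g k i = 0 ∨ g k i = 1) ∧ (∀ k j, h k j = 0 ∨ h k j = 1)

/-- The unitary assumption: every `g k` and every `h k` is a standard unit vector, and the
pairs `(g k, h k)` are pairwise distinct. -/
def UnitaryAssumption {n m q : ℕ} (g : Fin q → Fin n → ℝ)
    (h : Fin q → Fin (n + m) → ℝ) : Prop :=
  (∀ k, ∃ i : Fin n, g k = Pi.single i 1) ∧
  (∀ k, ∃ j : Fin (n + m), h k = Pi.single j 1) ∧
  (∀ k k', k ≠ k' → (g k, h k) ≠ (g k', h k'))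

/-- `(A, B)` is reducible: some simultaneous permutation of the states puts the pair,
for all parameter values, in block-triangular form with a zero top-right `n1 × (n - n1)`
block of `A` and a zero top `n1 × m` block of `B`, where `1 ≤ n1 < n`. -/
def Reducible {n m q : ℕ} (g : Fin q → Fin n → ℝ) (h : Fin q → Fin (n + m) → ℝ) : Prop :=
  ∃ (σ : Equiv.Perm (Fin n)) (n1 : ℕ), 1 ≤ n1 ∧ n1 < n ∧ ∀ p : Fin q → ℝ,
    (∀ i j : Fin n, (i : ℕ) < n1 → n1 ≤ (j : ℕ) → Amat g h p (σ i) (σ j) = 0) ∧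
    (∀ i : Fin n, (i : ℕ) < n1 → ∀ jb : Fin m, Bmat g h p (σ i) jb = 0)

/-- `(A, B)` is irreducible. -/
def PairIrreducible {n m q : ℕ} (g : Fin q → Fin n → ℝ)
    (h : Fin q → Fin (n + m) → ℝ) : Prop :=
  ¬ Reducible g h

/-- Arc (of any color) of the graph `𝔾` of `(A, B)` from vertex `a` to vertex `b`:
`b` is a row-vertex `i` (one of the first `n` vertices) and the `(i, a)` entry of some
`g k * h k` is nonzero. -/
def HasArc {n m q : ℕ} (g : Fin q → Fin n → ℝ) (h : Fin q → Fin (n + m) → ℝ)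
    (a b : Fin (n + m)) : Prop :=
  ∃ (k : Fin q) (i : Fin n), b = Fin.castAdd m i ∧ g k i * h k a ≠ 0

/-- `𝔾` has a spanning forest rooted at the `m` input vertices `n+1, …, n+m`: every other
vertex is reachable from some input vertex by a directed path. -/
def HasSpanningForestAtInputs {n m q : ℕ} (g : Fin q → Fin n → ℝ)
    (h : Fin q → Fin (n + m) → ℝ) : Prop :=
  ∀ v : Fin (n + m), (¬ ∃ j : Fin m, Fin.natAdd n j = v) →
    ∃ j : Fin m, Relation.ReflTransGen (HasArc g h) (Fin.natAdd n j) v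

/-- A multi-colored subgraph of `𝔾`, encoded by the data of its `n` arcs: each of the
vertices `1, …, n` is the head of exactly one arc, with tail `t i` and color `c i`.
Injectivity of `t` and of `c` says no two arcs share a start vertex or a color (no two
share an end vertex by construction); such a spanning subgraph is exactly a disjoint union
of `m` directed path graphs (whose sources are the `m` input vertices) and directed cycle
graphs, with all arc colors distinct. -/
def IsMCS {n m q : ℕ} (g : Fin q → Fin n → ℝ) (h : Fin q → Fin (n + m) → ℝ)
    (t : Fin n → Fin (n + m)) (c : Fin n → Fin q) : Prop :=
  Function.Injective t ∧ Function.Injective c ∧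
    ∀ i : Fin n, g (c i) i * h (c i) (t i) ≠ 0

/-- A pure sink of the multi-colored subgraph with tail map `t`: a sink that is not a
source (i.e. has no outgoing arc, and is one of the first `n` vertices). -/
def IsPureSink {n m : ℕ} (t : Fin n → Fin (n + m)) (v : Fin (n + m)) : Prop :=
  (¬ ∃ i : Fin n, t i = v) ∧ ∃ i : Fin n, Fin.castAdd m i = v

/-- A pure source: a source (one of the last `m` vertices) that is not a sink. -/
def IsPureSource {n m : ℕ} (t : Fin n → Fin (n + m)) (v : Fin (n + m)) : Prop :=
  (∃ i : Fin n, t i = v) ∧ ∃ j : Fin m, Fin.natAdd n j = v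

/-- A matrimonial partition, encoded by a permutation `μ` that matches each pure sink with
a distinct pure source (the two-element cells are the pairs `{v, μ v}` for `v` a pure sink;
all other vertices lie in singleton cells). -/
def IsMatrimonial {n m : ℕ} (t : Fin n → Fin (n + m)) (μ : Equiv.Perm (Fin (n + m))) : Prop :=
  ∀ v, IsPureSink t v ↔ IsPureSource t (μ v)

/-- The successor map of the quotient of a multi-colored subgraph by a matrimonial
partition: each vertex with an outgoing arc is sent to the head of that arc, each pure
sink is welded to (sent to) its paired pure source, and isolated vertices stay put. -/
noncomputable def weldMap {n m : ℕ} (t : Fin n → Fin (n + m))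
    (μ : Equiv.Perm (Fin (n + m))) (v : Fin (n + m)) : Fin (n + m) :=
  if hv : ∃ i : Fin n, t i = v then Fin.castAdd m hv.choose
  else if ∃ i : Fin n, Fin.castAdd m i = v then μ v else v

/-- Number of orbits of a self-map of `Fin N`. -/
noncomputable def orbitCount {N : ℕ} (f : Fin N → Fin N) : ℕ :=
  (Set.range fun v => {w | ∃ a b : ℕ, f^[a] v = f^[b] w}).ncard

/-- Number of isolated vertices of a multi-colored subgraph (vertices that are both a
source and a sink). -/
noncomputable def isolatedCount {n m : ℕ} (t : Fin n → Fin (n + m)) : ℕ :=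
  {v : Fin (n + m) | (¬ ∃ i : Fin n, t i = v) ∧ ∃ j : Fin m, Fin.natAdd n j = v}.ncard

/-- The number of directed cycle graphs in the quotient of a multi-colored subgraph by a
matrimonial partition: every orbit of the weld map, except the (singleton) orbits of the
isolated vertices, yields exactly one cycle graph of the quotient. -/
noncomputable def quotCycleCount {n m : ℕ} (t : Fin n → Fin (n + m))
    (μ : Equiv.Perm (Fin (n + m))) : ℕ :=
  orbitCount (weldMap t μ) - isolatedCount t

/-- `𝔾` has an unbalanced similarity class of multi-colored subgraphs: for some
multi-colored subgraph `(t, c)` and some matrimonial partition `μ` for its class, the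
numbers of odd and of even multi-colored subgraphs in its similarity class (same sink set,
i.e. same `Set.range t`, and same color set `Set.range c`) differ. -/
def HasUnbalancedClass {n m q : ℕ} (g : Fin q → Fin n → ℝ)
    (h : Fin q → Fin (n + m) → ℝ) : Prop :=
  ∃ (t : Fin n → Fin (n + m)) (c : Fin n → Fin q) (μ : Equiv.Perm (Fin (n + m))),
    IsMCS g h t c ∧ IsMatrimonial t μ ∧
    {tc : (Fin n → Fin (n + m)) × (Fin n → Fin q) |
        IsMCS g h tc.1 tc.2 ∧ Set.range tc.1 = Set.range t ∧
        Set.range tc.2 = Set.range c ∧ Odd (quotCycleCount tc.1 μ)}.ncard ≠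
      {tc : (Fin n → Fin (n + m)) × (Fin n → Fin q) |
        IsMCS g h tc.1 tc.2 ∧ Set.range tc.1 = Set.range t ∧
        Set.range tc.2 = Set.range c ∧ Even (quotCycleCount tc.1 μ)}.ncard

/-- Arc set of the directed path graph whose vertices, in order, are the list `l`. -/
def pathArcs {V : Type*} (l : List V) : Set (V × V) :=
  {a | ∃ k : ℕ, l[k]? = some a.1 ∧ l[k + 1]? = some a.2}

/-- Arc set of the directed cycle graph whose vertices, in cyclic order, are the list `l`. -/
def cycleArcs {V : Type*} (l : List V) : Set (V × V) :=
  pathArcs l ∪ {a | ∃ x y, l.getLast? = some x ∧ l.head? = some y ∧ a = (x, y)}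

/-- A cactus graph with vertex set `W`, arc set `E` and root `r`: a trunk (a directed path
graph, possibly a single vertex, starting at `r`) together with any number of buds, each
bud being a directed cycle graph together with a stem arc from a vertex already in the
graph (on the trunk or on the cycle of another bud) to a vertex of the cycle. -/
inductive IsCactus {V : Type*} : Set V → Set (V × V) → V → Prop where
  | trunk (r : V) (l : List V) (hnd : l.Nodup) (hhead : l.head? = some r) :
      IsCactus {v | v ∈ l} (pathArcs l) r
  | bud (r : V) (W : Set V) (E : Set (V × V)) (l : List V) (w u : V)
      (hc : IsCactus W E r) (hnd : l.Nodup) (hne : l ≠ [])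
      (hdisj : ∀ v ∈ l, v ∉ W) (hw : w ∈ W) (hu : u ∈ l) :
      IsCactus (W ∪ {v | v ∈ l}) (E ∪ cycleArcs l ∪ {(w, u)}) r

/-- `𝔾` has a spanning subgraph which is a disjoint union of `m` cactus graphs rooted at
the `m` input vertices `n+1, …, n+m`, respectively. -/
def HasSpanningCacti {n m q : ℕ} (g : Fin q → Fin n → ℝ)
    (h : Fin q → Fin (n + m) → ℝ) : Prop :=
  ∃ (W : Fin m → Set (Fin (n + m))) (F : Fin m → Set (Fin (n + m) × Fin (n + m))),
    (∀ j, IsCactus (W j) (F j) (Fin.natAdd n j)) ∧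
    (∀ j, ∀ a ∈ F j, HasArc g h a.1 a.2) ∧
    Pairwise (fun j j' => Disjoint (W j) (W j')) ∧
    (⋃ j, W j) = Set.univ

/-- Rank of the submatrix `G_S` whose columns are the `g i`, `i ∈ S`. -/
noncomputable def rankCols {q n1 : ℕ} (g : Fin q → Fin n1 → ℝ) (S : Finset (Fin q)) : ℕ :=
  (Matrix.of fun (i : Fin n1) (k : {x // x ∈ S}) => g k.1 i).rank

/-- Rank of the submatrix `H_S` whose rows are the `h i`, `i ∈ S`. -/
noncomputable def rankRows {q n2 : ℕ} (h : Fin q → Fin n2 → ℝ) (S : Finset (Fin q)) : ℕ :=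
  (Matrix.of fun (k : {x // x ∈ S}) (j : Fin n2) => h k.1 j).rank

/-- `I` is a jointly independent index set of `(G, H)`: both `{g i : i ∈ I}` and
`{h i : i ∈ I}` are linearly independent families. -/
def JointlyIndependent {q n1 n2 : ℕ} (g : Fin q → Fin n1 → ℝ) (h : Fin q → Fin n2 → ℝ)
    (I : Finset (Fin q)) : Prop :=
  LinearIndependent ℝ (fun i : {x // x ∈ I} => g i.1) ∧
  LinearIndependent ℝ (fun i : {x // x ∈ I} => h i.1)

/-- Maximum cardinality of a nonempty jointly independent index set of `(G, H)`,
taken to be `0` if none exists. -/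
noncomputable def maxJointIndep {q n1 n2 : ℕ} (g : Fin q → Fin n1 → ℝ)
    (h : Fin q → Fin n2 → ℝ) : ℕ :=
  sSup (insert 0 {c : ℕ | ∃ I : Finset (Fin q), I.Nonempty ∧
    JointlyIndependent g h I ∧ I.card = c})

/-- Arcs of the transfer graph of `{G_𝐪, H_𝐪}`; vertex `0` is `none`, vertex `i ∈ 𝐪`
is `some i`.  There is an arc from `0` to `i` iff `h_{i2} ≠ 0`, and an arc from `j` to `i`
iff the scalar `h_{i1} g_j` is nonzero. -/
def TArc {n m q : ℕ} (g : Fin q → Fin n → ℝ) (h : Fin q → Fin (n + m) → ℝ) :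
    Option (Fin q) → Option (Fin q) → Prop
  | none, some i => ∃ j : Fin m, h i (Fin.natAdd n j) ≠ 0
  | some j, some i => (∑ l : Fin n, h i (Fin.castAdd m l) * g j l) ≠ 0
  | _, none => False

/-- The transfer graph has a spanning tree rooted at vertex `0`: every vertex `1, …, q`
is reachable from vertex `0` by a directed path. -/
def TransferRootedAtZero {n m q : ℕ} (g : Fin q → Fin n → ℝ)
    (h : Fin q → Fin (n + m) → ℝ) : Prop :=
  ∀ i : Fin q, Relation.ReflTransGen (TArc g h) none (some i)



section MatroidIntersection

set_option linter.unusedSectionVars false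
open Module Submodule


variable {ι : Type} [DecidableEq ι]
variable {V : Type} [AddCommGroup V] [Module ℝ V] [FiniteDimensional ℝ V]

noncomputable def rk (v : ι → V) (S : Finset ι) : ℕ :=
  finrank ℝ (span ℝ (v '' ↑S))

def FinsetLI (v : ι → V) (I : Finset ι) : Prop :=
  LinearIndependent ℝ (fun i : {x // x ∈ I} => v i)

lemma rk_mono (v : ι → V) {S T : Finset ι} (h : S ⊆ T) : rk v S ≤ rk v T :=
  Submodule.finrank_mono (span_mono (Set.image_mono h))

lemma rk_empty (v : ι → V) : rk v (∅ : Finset ι) = 0 := by simp [rk]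

lemma rk_submod (v : ι → V) (S T : Finset ι) :
    rk v (S ∪ T) + rk v (S ∩ T) ≤ rk v S + rk v T := by
  have h1 : span ℝ (v '' ↑(S ∪ T)) = span ℝ (v '' ↑S) ⊔ span ℝ (v '' ↑T) := by
    rw [Finset.coe_union, Set.image_union, Submodule.span_union]
  have h2 : span ℝ (v '' ↑(S ∩ T)) ≤ span ℝ (v '' ↑S) ⊓ span ℝ (v '' ↑T) := by
    refine le_inf (span_mono ?_) (span_mono ?_) <;>
      exact Set.image_mono (by simp [Finset.coe_inter, Set.inter_subset_left, Set.inter_subset_right])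
  calc rk v (S ∪ T) + rk v (S ∩ T)
      ≤ finrank ℝ ↥(span ℝ (v '' ↑S) ⊔ span ℝ (v '' ↑T)) +
        finrank ℝ ↥(span ℝ (v '' ↑S) ⊓ span ℝ (v '' ↑T)) := by
        exact add_le_add (le_of_eq (by rw [rk, h1])) (Submodule.finrank_mono h2)
    _ = rk v S + rk v T := Submodule.finrank_sup_add_finrank_inf_eq _ _

lemma rk_eq_card_of_li {v : ι → V} {I : Finset ι} (hI : FinsetLI v I) :
    rk v I = I.card := by
  have hr : v '' ↑I = Set.range (fun i : {x // x ∈ I} => v i) := Set.image_eq_range v ↑I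
  rw [rk, hr, finrank_span_eq_card hI, Fintype.card_coe]

lemma FinsetLI.mono {v : ι → V} {I J : Finset ι} (hJI : J ⊆ I) (hI : FinsetLI v I) :
    FinsetLI v J := by
  refine hI.comp (fun x : {x // x ∈ J} => (⟨x.1, hJI x.2⟩ : {x // x ∈ I})) ?_
  intro a b hab
  exact Subtype.ext (by simpa using hab)

lemma FinsetLI.empty (v : ι → V) : FinsetLI v (∅ : Finset ι) := by
  have : IsEmpty {x // x ∈ (∅ : Finset ι)} := ⟨fun x => absurd x.2 (Finset.notMem_empty _)⟩
  exact linearIndependent_empty_type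

lemma rk_insert_zero {v : ι → V} {e : ι} (he : v e = 0) (S : Finset ι) :
    rk v (insert e S) = rk v S := by
  rw [rk, Finset.coe_insert, Set.image_insert_eq, he,
    Submodule.span_insert_eq_span (Submodule.zero_mem _), rk]

lemma rk_quot {v : ι → V} {e : ι} (he : v e ≠ 0) (S : Finset ι) :
    rk ((span ℝ {v e}).mkQ ∘ v) S + 1 = rk v (insert e S) := by
  set W := span ℝ {v e} with hW
  set p := span ℝ (v '' ↑S) with hp
  have h1 : span ℝ ((W.mkQ ∘ v) '' ↑S) = p.map W.mkQ := by
    rw [Set.image_comp, Submodule.span_image]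
  have h2 : finrank ℝ (p.map W.mkQ) + finrank ℝ (W ⊓ p : Submodule ℝ V) = finrank ℝ p := by
    have hrn := LinearMap.finrank_range_add_finrank_ker (W.mkQ.comp p.subtype)
    have hr : LinearMap.range (W.mkQ.comp p.subtype) = p.map W.mkQ := by
      rw [LinearMap.range_comp, Submodule.range_subtype]
    have hk : LinearMap.ker (W.mkQ.comp p.subtype) = Submodule.comap p.subtype (W ⊓ p) := by
      rw [LinearMap.ker_comp, Submodule.ker_mkQ]
      ext x; simp [x.2]
    rw [hr, hk] at hrn
    rwa [(Submodule.comapSubtypeEquivOfLe (inf_le_right : W ⊓ p ≤ p)).finrank_eq] at hrn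
  have h3 : span ℝ (v '' ↑(insert e S)) = W ⊔ p := by
    rw [Finset.coe_insert, Set.image_insert_eq, Submodule.span_insert]
  have h4 : finrank ℝ (W ⊔ p : Submodule ℝ V) + finrank ℝ (W ⊓ p : Submodule ℝ V)
      = finrank ℝ W + finrank ℝ p := Submodule.finrank_sup_add_finrank_inf_eq _ _
  have h5 : finrank ℝ W = 1 := finrank_span_singleton he
  rw [rk, rk, h1, h3]
  omega

lemma li_insert_of_quot {v : ι → V} {e : ι} (he : v e ≠ 0) {J : Finset ι} (heJ : e ∉ J)
    (hJ : FinsetLI ((span ℝ {v e}).mkQ ∘ v) J) : FinsetLI v (insert e J) := by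
  set W := span ℝ {v e} with hW
  rw [FinsetLI, Fintype.linearIndependent_iff]
  intro c hc
  set d : ι → ℝ := fun x => if hx : x ∈ insert e J then c ⟨x, hx⟩ else 0 with hd
  have hsum : ∑ x ∈ insert e J, d x • v x = 0 := by
    rw [← Finset.sum_coe_sort (insert e J) (fun x => d x • v x)]
    rw [← hc]
    refine Finset.sum_congr rfl fun i _ => ?_
    simp only [hd, dif_pos i.2]
  rw [Finset.sum_insert heJ] at hsum
  have h0 : W.mkQ (v e) = 0 := by
    rw [Submodule.mkQ_apply, Submodule.Quotient.mk_eq_zero]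
    exact Submodule.mem_span_singleton_self _
  have hq : ∑ x ∈ J, d x • W.mkQ (v x) = 0 := by
    have := congrArg W.mkQ hsum
    simpa [map_add, map_sum, h0] using this
  have hJ0 : ∀ i : {x // x ∈ J}, d i.1 = 0 := by
    have := Fintype.linearIndependent_iff.mp hJ (fun i => d i.1)
    apply this
    simp only [Function.comp_apply]
    rw [Finset.sum_coe_sort J (fun x => d x • W.mkQ (v x))]
    exact hq
  have hde : d e = 0 := by
    have : d e • v e = 0 := by
      have : ∑ x ∈ J, d x • v x = 0 := by
        rw [← Finset.sum_coe_sort J (fun x => d x • v x)]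
        exact Finset.sum_eq_zero fun i _ => by rw [hJ0 i, zero_smul]
      rw [this, add_zero] at hsum
      exact hsum
    rcases smul_eq_zero.mp this with h | h
    · exact h
    · exact absurd h he
  intro i
  have : c i = d i.1 := by simp only [hd, dif_pos i.2]
  rw [this]
  rcases Finset.mem_insert.mp i.2 with h | h
  · rw [h]; exact hde
  · exact hJ0 ⟨i.1, h⟩



set_option maxHeartbeats 1000000 in
lemma exists_common_aux (n : ℕ) :
    ∀ (V₁ V₂ : Type) [AddCommGroup V₁] [AddCommGroup V₂],
      ∀ [Module ℝ V₁] [Module ℝ V₂] [FiniteDimensional ℝ V₁] [FiniteDimensional ℝ V₂],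
      ∀ (g : ι → V₁) (h : ι → V₂) (E : Finset ι), E.card = n →
      ∃ I S : Finset ι, I ⊆ E ∧ S ⊆ E ∧ FinsetLI g I ∧ FinsetLI h I ∧
        rk g S + rk h (E \ S) ≤ I.card := by
  induction n with
  | zero =>
    intro V₁ V₂ _ _ _ _ _ _ g h E hE
    rw [Finset.card_eq_zero] at hE; subst hE
    exact ⟨∅, ∅, Finset.Subset.refl _, Finset.Subset.refl _, FinsetLI.empty g,
      FinsetLI.empty h, by simp [rk_empty]⟩
  | succ n IH =>
    intro V₁ V₂ _ _ _ _ _ _ g h E hE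
    obtain ⟨e, he⟩ : E.Nonempty := Finset.card_pos.mp (by omega)
    set E' := E.erase e with hE'
    have hcard' : E'.card = n := by rw [hE', Finset.card_erase_of_mem he, hE]; omega
    have hE'sub : E' ⊆ E := Finset.erase_subset _ _
    have heE' : e ∉ E' := Finset.notMem_erase _ _
    by_cases hg0 : g e = 0
    · obtain ⟨I, S, hIE, hSE, hgI, hhI, hle⟩ := IH V₁ V₂ g h E' hcard'
      have heS : e ∉ S := fun hx => heE' (hSE hx)
      refine ⟨I, insert e S, hIE.trans hE'sub,
        Finset.insert_subset he (hSE.trans hE'sub), hgI, hhI, ?_⟩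
      have h1 : rk g (insert e S) = rk g S := rk_insert_zero hg0 S
      have h2 : E \ insert e S = E' \ S := by
        ext x
        by_cases hxe : x = e
        · subst hxe; simp [hE', heS]
        · simp [hE', hxe, Finset.mem_erase]
      rw [h1, h2]; exact hle
    · by_cases hh0 : h e = 0
      · obtain ⟨I, S, hIE, hSE, hgI, hhI, hle⟩ := IH V₁ V₂ g h E' hcard'
        have heS : e ∉ S := fun hx => heE' (hSE hx)
        refine ⟨I, S, hIE.trans hE'sub, hSE.trans hE'sub, hgI, hhI, ?_⟩
        have h2 : E \ S = insert e (E' \ S) := by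
          ext x
          by_cases hxe : x = e
          · subst hxe; simp [hE', he, heS]
          · simp [hE', hxe, Finset.mem_erase]
        rw [h2, rk_insert_zero hh0]; exact hle
      · obtain ⟨I, S, hIE, hSE, hgI, hhI, hle1⟩ := IH V₁ V₂ g h E' hcard'
        obtain ⟨J, T, hJE, hTE, hgJ, hhJ, hle2⟩ :=
          IH (V₁ ⧸ span ℝ {g e}) (V₂ ⧸ span ℝ {h e})
            ((span ℝ {g e}).mkQ ∘ g) ((span ℝ {h e}).mkQ ∘ h) E' hcard'
        have heJ : e ∉ J := fun hx => heE' (hJE hx)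
        have heT : e ∉ T := fun hx => heE' (hTE hx)
        have heS : e ∉ S := fun hx => heE' (hSE hx)
        have c1 : rk ((span ℝ {g e}).mkQ ∘ g) T + 1 = rk g (insert e T) := rk_quot hg0 T
        have c2 : rk ((span ℝ {h e}).mkQ ∘ h) (E' \ T) + 1 = rk h (insert e (E' \ T)) :=
          rk_quot hh0 _
        have hET : insert e (E' \ T) = E \ T := by
          ext x
          by_cases hxe : x = e
          · subst hxe; simp [hE', he, heT]
          · simp [hE', hxe, Finset.mem_erase]
        rw [hET] at c2
        have key2 : rk g (insert e T) + rk h (E \ T) ≤ J.card + 2 := by omega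
        by_cases hU : rk g (insert e (S ∪ T)) + rk h (E \ insert e (S ∪ T)) ≤ J.card + 1
        · refine ⟨insert e J, insert e (S ∪ T),
            Finset.insert_subset he (hJE.trans hE'sub),
            Finset.insert_subset he ((Finset.union_subset hSE hTE).trans hE'sub),
            li_insert_of_quot hg0 heJ hgJ, li_insert_of_quot hh0 heJ hhJ, ?_⟩
          rw [Finset.card_insert_of_notMem heJ]
          omega
        · push_neg at hU
          have sub1 : rk g (S ∪ insert e T) + rk g (S ∩ insert e T)
              ≤ rk g S + rk g (insert e T) := rk_submod g S (insert e T)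
          have e1 : S ∪ insert e T = insert e (S ∪ T) := by
            ext x; simp [Finset.mem_union, Finset.mem_insert, or_comm, or_assoc, or_left_comm]
          have m1 : rk g (S ∩ T) ≤ rk g (S ∩ insert e T) :=
            rk_mono g (Finset.inter_subset_inter (Finset.Subset.refl S)
              (Finset.subset_insert e T))
          have sub2 : rk h ((E' \ S) ∪ (E \ T)) + rk h ((E' \ S) ∩ (E \ T))
              ≤ rk h (E' \ S) + rk h (E \ T) := rk_submod h _ _
          have e2 : (E' \ S) ∪ (E \ T) = E \ (S ∩ T) := by
            ext x
            by_cases hxe : x = e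
            · subst hxe; simp [hE', he, heT]
            · simp [hE', hxe, Finset.mem_erase]; tauto
          have e3 : (E' \ S) ∩ (E \ T) = E \ insert e (S ∪ T) := by
            ext x
            by_cases hxe : x = e
            · subst hxe; simp [hE']
            · simp [hE', hxe, Finset.mem_erase]; tauto
          rw [e1] at sub1
          rw [e2, e3] at sub2
          refine ⟨I, S ∩ T, hIE.trans hE'sub,
            (Finset.inter_subset_left.trans hSE).trans hE'sub, hgI, hhI, ?_⟩
          omega


omit [DecidableEq ι] in
lemma rankCols_eq {q n1 : ℕ} (g : Fin q → Fin n1 → ℝ) (S : Finset (Fin q)) :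
    rankCols g S = rk g S := by
  have hr : Set.range (Matrix.of fun (i : Fin n1) (k : {x // x ∈ S}) => g k.1 i).col
      = g '' ↑S := by
    ext x
    constructor
    · rintro ⟨k, rfl⟩; exact ⟨k.1, k.2, rfl⟩
    · rintro ⟨y, hy, rfl⟩; exact ⟨⟨y, hy⟩, rfl⟩
  rw [rankCols, Matrix.rank_eq_finrank_span_cols, hr, rk]

omit [DecidableEq ι] in
lemma rankRows_eq {q n2 : ℕ} (h : Fin q → Fin n2 → ℝ) (S : Finset (Fin q)) :
    rankRows h S = rk h S := by
  have hr : Set.range (Matrix.of fun (k : {x // x ∈ S}) (j : Fin n2) => h k.1 j).row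
      = h '' ↑S := by
    ext x
    constructor
    · rintro ⟨k, rfl⟩; exact ⟨k.1, k.2, rfl⟩
    · rintro ⟨y, hy, rfl⟩; exact ⟨⟨y, hy⟩, rfl⟩
  rw [rankRows, Matrix.rank_eq_finrank_span_row, hr, rk]

end MatroidIntersection

/-- The maximum cardinality of a (nonempty) jointly independent index set
of `(G, H)` (taken to be `0` if none exists) equals
`min_{S ⊆ 𝐪} (rank G_S + rank H_{𝐪∖S})`. -/
theorem stmt6 (n1 n2 q : ℕ) (h1 : 1 ≤ n1) (h2 : 1 ≤ n2) (hq : 1 ≤ q)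
    (g : Fin q → Fin n1 → ℝ) (h : Fin q → Fin n2 → ℝ) :
    maxJointIndep g h = ⨅ S : Finset (Fin q), (rankCols g S + rankRows h Sᶜ) := by
  classical
  set Sset := {c : ℕ | ∃ I : Finset (Fin q), I.Nonempty ∧
    JointlyIndependent g h I ∧ I.card = c} with hSset
  have hbdd : BddAbove (insert 0 Sset) := by
    refine ⟨q, ?_⟩
    rintro c (rfl | ⟨I, _, _, rfl⟩)
    · exact Nat.zero_le q
    · simpa using Finset.card_le_univ I
  have easy : ∀ I : Finset (Fin q), JointlyIndependent g h I → ∀ S : Finset (Fin q),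
      I.card ≤ rk g S + rk h Sᶜ := by
    intro I hI S
    have h1 : (I ∩ S).card ≤ rk g S := by
      rw [← rk_eq_card_of_li (FinsetLI.mono Finset.inter_subset_left hI.1)]
      exact rk_mono g Finset.inter_subset_right
    have h2 : (I \ S).card ≤ rk h Sᶜ := by
      rw [← rk_eq_card_of_li (FinsetLI.mono Finset.sdiff_subset hI.2)]
      refine rk_mono h ?_
      intro x hx
      rw [Finset.mem_compl]
      exact (Finset.mem_sdiff.mp hx).2
    have h3 : (I ∩ S).card + (I \ S).card = I.card := Finset.card_inter_add_card_sdiff I S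
    omega
  rw [maxJointIndep, ← hSset]
  apply le_antisymm
  · apply csSup_le ⟨0, Set.mem_insert _ _⟩
    rintro c (rfl | ⟨I, hInem, hI, rfl⟩)
    · exact Nat.zero_le _
    · refine le_ciInf fun S => ?_
      rw [rankCols_eq, rankRows_eq]
      exact easy I hI S
  · obtain ⟨I, S, hIE, hSE, hgI, hhI, hle⟩ :=
      exists_common_aux (Finset.univ : Finset (Fin q)).card (Fin n1 → ℝ) (Fin n2 → ℝ) g h Finset.univ rfl
    have hcompl : (Finset.univ : Finset (Fin q)) \ S = Sᶜ :=
      (Finset.compl_eq_univ_sdiff S).symm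
    have h4 : (⨅ S' : Finset (Fin q), (rankCols g S' + rankRows h S'ᶜ))
        ≤ rankCols g S + rankRows h Sᶜ := ciInf_le (OrderBot.bddBelow _) S
    have h5 : rankCols g S + rankRows h Sᶜ ≤ I.card := by
      rw [rankCols_eq, rankRows_eq, ← hcompl]
      exact hle
    have h6 : I.card ≤ sSup (insert 0 Sset) := by
      rcases Finset.eq_empty_or_nonempty I with rfl | hne
      · simp
      · exact le_csSup hbdd (Set.mem_insert_of_mem _ ⟨I, hne, ⟨hgI, hhI⟩, rfl⟩)
    exact h4.trans (h5.trans h6)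

end StructCtrl
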